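/- Let I = P_{F_1} ⋯ P_{F_r} ⊆ S = K[x_1,…,x_n] be a transversal polymatroidal ideal. Then the graded maximal ideal m = (x_1,…,x_n) belongs to Ass(S/I) if and only if ⋃_{i=1}^r F_i = [n] and the intersection graph G_I is connected. -/

import Mathlib

open MvPolynomial

/-- The monomial prime ideal `P_F = (x_i : i ∈ F)`. -/
noncomputable def PF {K : Type} [Field K] {n : ℕ} (F : Finset (Fin n)) :
    Ideal (MvPolynomial (Fin n) K) :=
  Ideal.span ((fun i => (X i : MvPolynomial (Fin n) K)) '' ↑F)

/-- The intersection graph `G_I` of `I = P_{F_1} ⋯ P_{F_r}`: vertices `1, …, r`, with an edge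
`{i, j}` iff `F_i ∩ F_j ≠ ∅`. -/
def interGraph {n r : ℕ} (F : Fin r → Finset (Fin n)) : SimpleGraph (Fin r) :=
  SimpleGraph.fromRel fun i j => (F i ∩ F j).Nonempty

section Aux

variable {K : Type} [Field K] {n r : ℕ}

lemma prod_PF_span (x0 : Fin n) (F : Fin r → Finset (Fin n)) (s : Finset (Fin r)) :
    ∏ i ∈ s, PF (K := K) (F i) =
      Ideal.span ((fun d => monomial d (1 : K)) ''
        {d | ∃ g : Fin r → Fin n, (∀ i ∈ s, g i ∈ F i) ∧
          d = ∑ i ∈ s, Finsupp.single (g i) 1}) := by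
  classical
  induction s using Finset.induction_on with
  | empty =>
      have : {d : Fin n →₀ ℕ | ∃ g : Fin r → Fin n, (∀ i ∈ (∅ : Finset (Fin r)), g i ∈ F i) ∧
          d = ∑ i ∈ (∅ : Finset (Fin r)), Finsupp.single (g i) 1} = {0} := by
        ext d
        simp only [Set.mem_setOf_eq, Finset.notMem_empty, false_implies, implies_true,
          true_and, Finset.sum_empty, Set.mem_singleton_iff]
        exact ⟨fun ⟨g, hg⟩ => hg, fun h => ⟨fun _ => x0, h⟩⟩
      rw [Finset.prod_empty, this, Set.image_singleton]
      rw [monomial_zero', C_1, Ideal.span_singleton_one, Ideal.one_eq_top]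
  | @insert a s ha ih =>
      rw [Finset.prod_insert ha, ih, PF, Ideal.span_mul_span]
      congr 1
      have hX : ∀ j : Fin n, (X j : MvPolynomial (Fin n) K) = monomial (Finsupp.single j 1) 1 := by
        intro j; rw [← X_pow_eq_monomial, pow_one]
      ext p
      simp only [Set.mem_iUnion, Set.mem_singleton_iff, Set.mem_image, exists_prop]
      constructor
      · rintro ⟨x, ⟨j, hj, rfl⟩, y, ⟨d, ⟨g, hg, rfl⟩, rfl⟩, rfl⟩
        refine ⟨Finsupp.single j 1 + ∑ i ∈ s, Finsupp.single (g i) 1,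
          ⟨Function.update g a j, ?_, ?_⟩, ?_⟩
        · intro i hi
          rcases Finset.mem_insert.mp hi with rfl | hi'
          · simpa using hj
          · rw [Function.update_of_ne (by rintro rfl; exact ha hi')]
            exact hg i hi'
        · rw [Finset.sum_insert ha, Function.update_self]
          congr 1
          exact Finset.sum_congr rfl fun i hi => by
            rw [Function.update_of_ne (by rintro rfl; exact ha hi)]
        · beta_reduce
          rw [hX, monomial_mul, one_mul]
      · rintro ⟨d, ⟨g, hg, rfl⟩, rfl⟩
        refine ⟨X (g a), ⟨g a, hg a (Finset.mem_insert_self a s), rfl⟩,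
          monomial (∑ i ∈ s, Finsupp.single (g i) 1) 1,
          ⟨∑ i ∈ s, Finsupp.single (g i) 1, ⟨g, fun i hi => hg i (Finset.mem_insert_of_mem hi), rfl⟩, rfl⟩, ?_⟩
        beta_reduce
        rw [hX, monomial_mul, one_mul, Finset.sum_insert ha]

/-- Membership in the product of the `P_{F_i}`. -/
lemma mem_prod_PF (x0 : Fin n) (F : Fin r → Finset (Fin n)) (f : MvPolynomial (Fin n) K) :
    f ∈ ∏ i, PF (K := K) (F i) ↔
      ∀ e ∈ f.support, ∃ g : Fin r → Fin n, (∀ i, g i ∈ F i) ∧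
        (∑ i, Finsupp.single (g i) 1) ≤ e := by
  rw [prod_PF_span x0 F Finset.univ, mem_ideal_span_monomial_image]
  constructor
  · intro h e he
    obtain ⟨si, ⟨g, hg, rfl⟩, hle⟩ := h e he
    exact ⟨g, fun i => hg i (Finset.mem_univ i), hle⟩
  · intro h e he
    obtain ⟨g, hg, hle⟩ := h e he
    exact ⟨∑ i, Finsupp.single (g i) 1, ⟨g, fun i _ => hg i, rfl⟩, hle⟩

/-- total degree of an exponent vector -/
def edeg {n : ℕ} (d : Fin n →₀ ℕ) : ℕ := ∑ j, d j

lemma edeg_single (j : Fin n) : edeg (Finsupp.single j (1:ℕ)) = 1 := by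
  simp [edeg, Finsupp.single_apply]

lemma edeg_sum {ι : Type*} (s : Finset ι) (f : ι → (Fin n →₀ ℕ)) :
    edeg (∑ i ∈ s, f i) = ∑ i ∈ s, edeg (f i) := by
  simp only [edeg, Finsupp.finset_sum_apply]
  exact Finset.sum_comm

lemma edeg_mono {a b : Fin n →₀ ℕ} (h : a ≤ b) : edeg a ≤ edeg b :=
  Finset.sum_le_sum fun j _ => h j

lemma mem_max_ideal_iff (f : MvPolynomial (Fin n) K) :
    f ∈ Ideal.span (Set.range (X : Fin n → MvPolynomial (Fin n) K)) ↔
      constantCoeff f = 0 := by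
  rw [← Set.image_univ, mem_ideal_span_X_image]
  constructor
  · intro h
    by_contra h0
    have h0' : (0 : Fin n →₀ ℕ) ∈ f.support := by
      rw [MvPolynomial.mem_support_iff]
      rw [constantCoeff_eq] at h0
      exact h0
    obtain ⟨i, _, hi⟩ := h 0 h0'
    simp at hi
  · intro h0 m hm
    by_contra hc
    push_neg at hc
    have hm0 : m = 0 := by
      ext j; simpa using hc j (Set.mem_univ j)
    rw [hm0, MvPolynomial.mem_support_iff] at hm
    rw [constantCoeff_eq] at h0
    exact hm h0

lemma max_ideal_isPrime :
    (Ideal.span (Set.range (X : Fin n → MvPolynomial (Fin n) K))).IsPrime := by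
  have : Ideal.span (Set.range (X : Fin n → MvPolynomial (Fin n) K)) =
      RingHom.ker (constantCoeff : MvPolynomial (Fin n) K →+* K) := by
    ext f; rw [mem_max_ideal_iff, RingHom.mem_ker]
  rw [this]
  exact RingHom.ker_isPrime _

lemma exists_order [NeZero r] (F : Fin r → Finset (Fin n))
    (hc : (SimpleGraph.fromRel fun i j => (F i ∩ F j).Nonempty).Connected) :
    ∃ σ : Fin r ≃ Fin r, ∀ k : Fin r, k ≠ 0 →
      ∃ l : Fin r, l < k ∧ (F (σ l) ∩ F (σ k)).Nonempty := by
  classical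
  set G := (SimpleGraph.fromRel fun i j => (F i ∩ F j).Nonempty) with hG
  have key : ∀ k : ℕ, k ≤ r → ∃ f : Fin k → Fin r, Function.Injective f ∧
      ∀ m : Fin k, 0 < m.val → ∃ l : Fin k, l.val < m.val ∧ G.Adj (f l) (f m) := by
    intro k
    induction k with
    | zero => exact fun _ => ⟨Fin.elim0, fun x => x.elim0, fun m => m.elim0⟩
    | succ k ih =>
      intro hk1
      rcases Nat.eq_zero_or_pos k with rfl | hkpos
      · refine ⟨fun _ => 0, fun a b _ => ?_, fun m hm => absurd hm ?_⟩
        · have ha := a.isLt; have hb := b.isLt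
          apply Fin.ext; omega
        · have := m.isLt; omega
      · obtain ⟨f, hfinj, hfadj⟩ := ih (le_of_lt hk1)
        -- range f is not everything
        have hcard : (Set.range f).toFinset.card < r := by
          have : (Set.range f).toFinset.card ≤ k := by
            rw [Set.toFinset_range]
            exact (Finset.card_image_le).trans (by simp)
          omega
        obtain ⟨u, hu⟩ : ∃ u : Fin r, u ∉ Set.range f := by
          by_contra h
          push_neg at h
          have : (Set.range f).toFinset = Finset.univ := by
            ext x
            simp only [Set.mem_toFinset, Finset.mem_univ, iff_true]
            exact h x
          rw [this] at hcard; simp at hcard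
        have f0 : f ⟨0, hkpos⟩ ∈ Set.range f := ⟨_, rfl⟩
        obtain ⟨p⟩ := hc.preconnected (f ⟨0, hkpos⟩) u
        obtain ⟨d, hd, hdS⟩ := p.exists_boundary_dart (Set.range f) f0 hu
        obtain ⟨l0, hl0⟩ := hdS.1
        refine ⟨Fin.snoc f d.snd, ?_, ?_⟩
        · intro a b hab
          rcases Fin.eq_castSucc_or_eq_last a with ⟨a', rfl⟩ | rfl <;>
            rcases Fin.eq_castSucc_or_eq_last b with ⟨b', rfl⟩ | rfl
          · simp only [Fin.snoc_castSucc] at hab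
            exact congrArg Fin.castSucc (hfinj hab)
          · simp only [Fin.snoc_castSucc, Fin.snoc_last] at hab
            exact absurd ⟨a', hab⟩ hdS.2
          · simp only [Fin.snoc_castSucc, Fin.snoc_last] at hab
            exact absurd ⟨b', hab.symm⟩ hdS.2
          · rfl
        · intro m hm
          rcases Fin.eq_castSucc_or_eq_last m with ⟨m', rfl⟩ | rfl
          · obtain ⟨l, hl, hadj⟩ := hfadj m' (by simpa using hm)
            exact ⟨l.castSucc, hl, by simpa using hadj⟩
          · refine ⟨l0.castSucc, ?_, ?_⟩
            · simp only [Fin.coe_castSucc, Fin.val_last]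
              exact l0.isLt
            · simp only [Fin.snoc_castSucc, Fin.snoc_last, hl0]
              exact d.adj
  obtain ⟨f, hfinj, hfadj⟩ := key r le_rfl
  have hbij : Function.Bijective f := (Finite.injective_iff_bijective).mp hfinj
  refine ⟨Equiv.ofBijective f hbij, ?_⟩
  intro k hk
  obtain ⟨l, hl, hadj⟩ := hfadj k (by
    rcases Nat.eq_zero_or_pos k.val with h0 | h
    · exact absurd (Fin.ext h0) hk
    · exact h)
  refine ⟨l, ?_, ?_⟩
  · rw [Fin.lt_def]; exact hl
  rw [hG] at hadj
  rcases hadj with ⟨hne, h | h⟩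
  · exact h
  · rwa [Finset.inter_comm]

lemma sum_single_update {r : ℕ} (g : Fin r → Fin n) (i₀ : Fin r) (j : Fin n) :
    ∑ i, Finsupp.single (Function.update g i₀ j i) (1:ℕ) =
      Finsupp.single j 1 + ∑ i ∈ Finset.univ.erase i₀, Finsupp.single (g i) 1 := by
  classical
  rw [Finset.sum_eq_add_sum_sdiff_singleton_of_mem (Finset.mem_univ i₀)
    (fun i => Finsupp.single (Function.update g i₀ j i) (1:ℕ))]
  rw [Function.update_self, Finset.sdiff_singleton_eq_erase]
  congr 1
  exact Finset.sum_congr rfl fun i hi => by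
    rw [Function.update_of_ne (Finset.mem_erase.mp hi).1]

lemma tree_witness [NeZero r] (F' : Fin r → Finset (Fin n))
    (par : Fin r → Fin r) (c : Fin r → Fin n)
    (hpar : ∀ k : Fin r, k ≠ 0 → par k < k)
    (hcm : ∀ k : Fin r, k ≠ 0 → c k ∈ F' k ∩ F' (par k)) :
    ∀ i₀ : Fin r, ∀ j ∈ F' i₀, ∃ g : Fin r → Fin n,
      (∀ i, g i ∈ F' i) ∧
      ∑ i, Finsupp.single (g i) 1 =
        Finsupp.single j 1 + ∑ k ∈ Finset.univ.erase (0 : Fin r), Finsupp.single (c k) 1 := by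
  classical
  set D := ∑ k ∈ Finset.univ.erase (0 : Fin r), Finsupp.single (c k) (1 : ℕ) with hD
  suffices H : ∀ m : ℕ, ∀ i₀ : Fin r, i₀.val ≤ m → ∀ j ∈ F' i₀, ∃ g : Fin r → Fin n,
      (∀ i, g i ∈ F' i) ∧ (∀ k, i₀ < k → g k = c k) ∧
      ∑ i, Finsupp.single (g i) 1 = Finsupp.single j 1 + D by
    intro i₀ j hj
    obtain ⟨g, h1, _, h3⟩ := H i₀.val i₀ le_rfl j hj
    exact ⟨g, h1, h3⟩
  intro m
  induction m with
  | zero =>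
    intro i₀ h0 j hj
    have hi0 : i₀ = 0 := Fin.ext (Nat.le_zero.mp h0)
    subst hi0
    refine ⟨Function.update c 0 j, ?_, ?_, ?_⟩
    · intro i
      by_cases hi : i = 0
      · subst hi; rw [Function.update_self]; exact hj
      · rw [Function.update_of_ne hi]; exact (Finset.mem_inter.mp (hcm i hi)).1
    · intro k hk
      rw [Function.update_of_ne (by rintro rfl; exact absurd hk (lt_irrefl _))]
    · rw [sum_single_update, hD]
  | succ m ih =>
    intro i₀ hm j hj
    by_cases h0 : i₀ = 0
    · exact ih i₀ (by simp [h0]) j hj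
    · have hlt := hpar i₀ h0
      have hple : (par i₀).val ≤ m := by
        have h1 := Fin.lt_def.mp hlt
        have h2 : i₀.val ≤ m + 1 := hm
        omega
      obtain ⟨g', hg1, hg2, hg3⟩ := ih (par i₀) hple (c i₀)
        (Finset.mem_inter.mp (hcm i₀ h0)).2
      have hgi0 : g' i₀ = c i₀ := hg2 i₀ hlt
      refine ⟨Function.update g' i₀ j, ?_, ?_, ?_⟩
      · intro i
        by_cases hi : i = i₀
        · subst hi; rw [Function.update_self]; exact hj
        · rw [Function.update_of_ne hi]; exact hg1 i
      · intro k hk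
        rw [Function.update_of_ne (by rintro rfl; exact absurd hk (lt_irrefl _))]
        exact hg2 k (lt_trans hlt hk)
      · rw [sum_single_update]
        have hsplit : ∑ i, Finsupp.single (g' i) (1:ℕ) =
            Finsupp.single (g' i₀) 1 + ∑ i ∈ Finset.univ.erase i₀, Finsupp.single (g' i) 1 := by
          rw [Finset.sum_eq_add_sum_sdiff_singleton_of_mem (Finset.mem_univ i₀),
            Finset.sdiff_singleton_eq_erase]
        rw [hg3, hgi0] at hsplit
        have hcancel : ∑ i ∈ Finset.univ.erase i₀, Finsupp.single (g' i) (1:ℕ) = D :=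
          add_left_cancel hsplit.symm
        rw [hcancel]

open Finset in
theorem stmt7' {K : Type} [Field K] {n r : ℕ} (hr : 0 < r)
    (F : Fin r → Finset (Fin n)) (hF : ∀ i, (F i).Nonempty) :
    Ideal.span (Set.range (X : Fin n → MvPolynomial (Fin n) K)) ∈
        associatedPrimes (MvPolynomial (Fin n) K)
          (MvPolynomial (Fin n) K ⧸ ∏ i, PF (K := K) (F i)) ↔
      Finset.univ.biUnion F = Finset.univ ∧
        (SimpleGraph.fromRel fun i j => (F i ∩ F j).Nonempty).Connected := by
  classical
  have hrz : NeZero r := ⟨hr.ne'⟩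
  obtain ⟨x0, hx0⟩ := hF ⟨0, hr⟩
  set I := ∏ i, PF (K := K) (F i) with hI
  constructor
  · intro hass
    obtain ⟨hprime, wbar, hann⟩ := (isAssociatedPrime_iff).mp hass
    obtain ⟨w, rfl⟩ := Ideal.Quotient.mk_surjective wbar
    have hmem : ∀ f : MvPolynomial (Fin n) K,
        f ∈ Ideal.span (Set.range (X : Fin n → MvPolynomial (Fin n) K)) ↔ f * w ∈ I := by
      intro f
      rw [hann, Submodule.mem_colon_singleton, Submodule.mem_bot]
      have hsm : f • (Ideal.Quotient.mk I w) = Ideal.Quotient.mk I (f * w) := rfl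
      rw [hsm, Ideal.Quotient.eq_zero_iff_mem]
    have hwnI : w ∉ I := by
      intro hw
      have h1 : (1 : MvPolynomial (Fin n) K) ∈
          Ideal.span (Set.range (X : Fin n → MvPolynomial (Fin n) K)) :=
        (hmem 1).mpr (by rwa [one_mul])
      exact hprime.ne_top (Ideal.eq_top_iff_one _ |>.mpr h1)
    have hXmem : ∀ j : Fin n, X j * w ∈ I := fun j =>
      (hmem (X j)).mp ((mem_max_ideal_iff _).mpr (by simp))
    -- coverage
    have hcov : Finset.univ.biUnion F = Finset.univ := by
      rw [Finset.eq_univ_iff_forall]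
      intro j
      rw [Finset.mem_biUnion]
      by_contra hj
      push_neg at hj
      apply hwnI
      have hXw := hXmem j
      rw [hI, mem_prod_PF x0] at hXw ⊢
      intro e he
      have he' : (Finsupp.single j 1 + e) ∈ (X j * w).support := by
        rw [MvPolynomial.mem_support_iff, coeff_X_mul]
        exact MvPolynomial.mem_support_iff.mp he
      obtain ⟨g, hg, hle⟩ := hXw _ he'
      refine ⟨g, hg, ?_⟩
      rw [Finsupp.le_def] at hle ⊢
      intro l
      by_cases hl : l = j
      · subst hl
        have hz : (∑ i, Finsupp.single (g i) (1:ℕ)) l = 0 := by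
          rw [Finsupp.finset_sum_apply]
          apply Finset.sum_eq_zero
          intro i _
          rw [Finsupp.single_apply, if_neg]
          rintro rfl
          exact hj i (Finset.mem_univ i) (hg i)
        rw [hz]
        exact Nat.zero_le _
      · have hle' := hle l
        rwa [Finsupp.add_apply, Finsupp.single_apply, if_neg (fun h => hl h.symm),
          zero_add] at hle'
    refine ⟨hcov, ?_⟩
    rw [SimpleGraph.connected_iff]
    refine ⟨?_, ⟨⟨0, hr⟩⟩⟩
    intro u v
    by_contra hreach
    set G := (SimpleGraph.fromRel fun i j => (F i ∩ F j).Nonempty) with hG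
    set A : Set (Fin r) := {k | G.Reachable u k} with hA
    have hu : u ∈ A := SimpleGraph.Reachable.refl u
    have hv : v ∉ A := hreach
    have hdis : ∀ a, a ∈ A → ∀ b, b ∉ A → ∀ l, l ∈ F a → l ∈ F b → False := by
      intro a ha b hb l hla hlb
      apply hb
      have hadj : G.Adj a b := by
        rw [hG, SimpleGraph.fromRel_adj]
        exact ⟨fun h => hb (h ▸ ha), Or.inl ⟨l, Finset.mem_inter.mpr ⟨hla, hlb⟩⟩⟩
      exact SimpleGraph.Reachable.trans ha hadj.reachable
    have hbadex : ¬ (∀ e ∈ w.support, ∃ g : Fin r → Fin n, (∀ i, g i ∈ F i) ∧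
        ∑ i, Finsupp.single (g i) 1 ≤ e) := by
      intro h
      exact hwnI (by rw [hI, mem_prod_PF x0]; exact h)
    push_neg at hbadex
    obtain ⟨e, he, hbad⟩ := hbadex
    obtain ⟨jA, hjA⟩ := hF u
    obtain ⟨jB, hjB⟩ := hF v
    have hget : ∀ j : Fin n, ∃ g : Fin r → Fin n, (∀ i, g i ∈ F i) ∧
        ∑ i, Finsupp.single (g i) 1 ≤ Finsupp.single j 1 + e := by
      intro j
      have hXw := hXmem j
      rw [hI, mem_prod_PF x0] at hXw
      apply hXw
      rw [MvPolynomial.mem_support_iff, coeff_X_mul]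
      exact MvPolynomial.mem_support_iff.mp he
    obtain ⟨g1, hg1, hle1⟩ := hget jA
    obtain ⟨g2, hg2, hle2⟩ := hget jB
    classical
    set g : Fin r → Fin n := fun i => if i ∈ A then g2 i else g1 i with hgdef
    have hgF : ∀ i, g i ∈ F i := by
      intro i
      rw [hgdef]
      by_cases hi : i ∈ A
      · simp only [if_pos hi]; exact hg2 i
      · simp only [if_neg hi]; exact hg1 i
    refine hbad g hgF ?_
    rw [Finsupp.le_def]
    intro l
    rw [Finsupp.finset_sum_apply]
    by_cases hlA : ∃ a ∈ A, l ∈ F a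
    · have hterm : ∀ i, (Finsupp.single (g i) (1:ℕ)) l ≤ (Finsupp.single (g2 i) 1) l := by
        intro i
        by_cases hi : i ∈ A
        · rw [hgdef]; simp only [if_pos hi]; exact le_rfl
        · have hne : g i ≠ l := by
            rw [hgdef]; simp only [if_neg hi]
            rintro rfl
            obtain ⟨a, ha, hla⟩ := hlA
            exact hdis a ha i hi _ hla (hg1 i)
          rw [Finsupp.single_apply, if_neg hne]
          exact Nat.zero_le _
      calc ∑ i, (Finsupp.single (g i) (1:ℕ)) l
          ≤ ∑ i, (Finsupp.single (g2 i) (1:ℕ)) l := Finset.sum_le_sum fun i _ => hterm i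
        _ = (∑ i, Finsupp.single (g2 i) (1:ℕ)) l := (Finsupp.finset_sum_apply _ _ _).symm
        _ ≤ ((Finsupp.single jB 1 + e : Fin n →₀ ℕ)) l := Finsupp.le_def.mp hle2 l
        _ = e l := by
            rw [Finsupp.add_apply, Finsupp.single_apply, if_neg, zero_add]
            rintro rfl
            obtain ⟨a, ha, hla⟩ := hlA
            exact hdis a ha v hv _ hla hjB
    · push_neg at hlA
      have hterm : ∀ i, (Finsupp.single (g i) (1:ℕ)) l ≤ (Finsupp.single (g1 i) 1) l := by
        intro i
        by_cases hi : i ∈ A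
        · have hne : g i ≠ l := by
            rw [hgdef]; simp only [if_pos hi]
            rintro rfl
            exact hlA i hi (hg2 i)
          rw [Finsupp.single_apply, if_neg hne]
          exact Nat.zero_le _
        · rw [hgdef]; simp only [if_neg hi]; exact le_rfl
      calc ∑ i, (Finsupp.single (g i) (1:ℕ)) l
          ≤ ∑ i, (Finsupp.single (g1 i) (1:ℕ)) l := Finset.sum_le_sum fun i _ => hterm i
        _ = (∑ i, Finsupp.single (g1 i) (1:ℕ)) l := (Finsupp.finset_sum_apply _ _ _).symm
        _ ≤ ((Finsupp.single jA 1 + e : Fin n →₀ ℕ)) l := Finsupp.le_def.mp hle1 l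
        _ = e l := by
            rw [Finsupp.add_apply, Finsupp.single_apply, if_neg, zero_add]
            rintro rfl
            exact hlA u hu hjA
  · rintro ⟨hcov, hconn⟩
    obtain ⟨σ, hσ⟩ := exists_order F hconn
    set F' : Fin r → Finset (Fin n) := fun k => F (σ k) with hF'
    set par : Fin r → Fin r := fun k => if h : k = 0 then 0 else (hσ k h).choose with hpardef
    set c : Fin r → Fin n := fun k =>
      if h : k = 0 then x0 else (hσ k h).choose_spec.2.choose with hcdef
    have hpar : ∀ k : Fin r, k ≠ 0 → par k < k := by
      intro k hk
      rw [hpardef]; simp only [dif_neg hk]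
      exact (hσ k hk).choose_spec.1
    have hcm : ∀ k : Fin r, k ≠ 0 → c k ∈ F' k ∩ F' (par k) := by
      intro k hk
      have h1 := (hσ k hk).choose_spec.2.choose_spec
      rw [Finset.mem_inter] at h1
      rw [hcdef, hpardef]
      simp only [dif_neg hk, hF']
      exact Finset.mem_inter.mpr ⟨h1.2, h1.1⟩
    have TW := tree_witness F' par c hpar hcm
    set D := ∑ k ∈ Finset.univ.erase (0 : Fin r), Finsupp.single (c k) (1:ℕ) with hDdef
    have hDdeg : edeg D = r - 1 := by
      rw [hDdef, edeg_sum]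
      simp only [edeg_single]
      rw [Finset.sum_const, smul_eq_mul, mul_one, Finset.card_erase_of_mem (Finset.mem_univ _),
        Finset.card_univ, Fintype.card_fin]
    have hgdeg : ∀ g : Fin r → Fin n, edeg (∑ i, Finsupp.single (g i) (1:ℕ)) = r := by
      intro g
      rw [edeg_sum]
      simp only [edeg_single]
      rw [Finset.sum_const, smul_eq_mul, mul_one, Finset.card_univ, Fintype.card_fin]
    have hDnot : monomial D (1:K) ∉ I := by
      rw [hI, mem_prod_PF x0]
      intro hcon
      have hsup : D ∈ (monomial D (1:K)).support := by
        rw [support_monomial, if_neg one_ne_zero]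
        exact Finset.mem_singleton_self _
      obtain ⟨g, hg, hle⟩ := hcon D hsup
      have hmono := edeg_mono hle
      rw [hgdeg, hDdeg] at hmono
      omega
    have hXD : ∀ j : Fin n, X j * monomial D (1:K) ∈ I := by
      intro j
      have hj : j ∈ Finset.univ.biUnion F := hcov ▸ Finset.mem_univ j
      obtain ⟨i₁, _, hji⟩ := Finset.mem_biUnion.mp hj
      have hjF' : j ∈ F' (σ.symm i₁) := by
        rw [hF']; simp only [Equiv.apply_symm_apply]; exact hji
      obtain ⟨g, hg, hsum⟩ := TW (σ.symm i₁) j hjF'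
      have hXj : (X j : MvPolynomial (Fin n) K) = monomial (Finsupp.single j 1) 1 := by
        rw [← X_pow_eq_monomial, pow_one]
      rw [hXj, monomial_mul, one_mul, hI, mem_prod_PF x0]
      intro e hesup
      rw [support_monomial, if_neg one_ne_zero, Finset.mem_singleton] at hesup
      subst hesup
      refine ⟨fun i => g (σ.symm i), fun i => ?_, le_of_eq ?_⟩
      · have := hg (σ.symm i)
        rw [hF'] at this
        simpa using this
      · rw [← hsum]
        exact Equiv.sum_comp σ.symm (fun i => Finsupp.single (g i) (1:ℕ))
    refine (isAssociatedPrime_iff).mpr ⟨max_ideal_isPrime, Ideal.Quotient.mk I (monomial D 1), ?_⟩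
    ext f
    rw [mem_max_ideal_iff, Submodule.mem_colon_singleton, Submodule.mem_bot]
    have hsm : f • (Ideal.Quotient.mk I (monomial D (1:K))) =
        Ideal.Quotient.mk I (f * monomial D 1) := rfl
    rw [hsm, Ideal.Quotient.eq_zero_iff_mem]
    constructor
    · intro hf
      have hfm : f ∈ Ideal.span (Set.range (X : Fin n → MvPolynomial (Fin n) K)) :=
        (mem_max_ideal_iff f).mpr hf
      refine Submodule.span_induction ?_ ?_ ?_ ?_ hfm
      · rintro x ⟨j, rfl⟩
        exact hXD j
      · simp
      · intro x y _ _ hx hy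
        rw [add_mul]; exact Ideal.add_mem _ hx hy
      · intro a x _ hx
        rw [smul_eq_mul, mul_assoc]
        exact Ideal.mul_mem_left _ _ hx
    · intro hf
      by_contra hc0
      have hsup : D ∈ (f * monomial D (1:K)).support := by
        rw [MvPolynomial.mem_support_iff]
        have hco : coeff (0 + D) (f * monomial D (1:K)) = coeff 0 f * 1 :=
          coeff_mul_monomial 0 D 1 f
        rw [zero_add, mul_one] at hco
        rw [hco]
        intro h0
        apply hc0
        rw [constantCoeff_eq]
        exact h0
      rw [hI, mem_prod_PF x0] at hf
      obtain ⟨g, hg, hle⟩ := hf D hsup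
      have hmono := edeg_mono hle
      rw [hgdeg, hDdeg] at hmono
      omega


end Aux

/-- For a transversal polymatroidal ideal `I = P_{F_1} ⋯ P_{F_r}`, the graded maximal ideal
is associated to `S/I` iff `⋃ F_i = [n]` and the intersection graph `G_I` is connected. -/
theorem stmt7 {K : Type} [Field K] {n r : ℕ} (hr : 0 < r)
    (F : Fin r → Finset (Fin n)) (hF : ∀ i, (F i).Nonempty) :
    Ideal.span (Set.range (X : Fin n → MvPolynomial (Fin n) K)) ∈
        associatedPrimes (MvPolynomial (Fin n) K)
          (MvPolynomial (Fin n) K ⧸ ∏ i, PF (K := K) (F i)) ↔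
      Finset.univ.biUnion F = Finset.univ ∧ (interGraph F).Connected := by
  exact stmt7' hr F hF
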